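/- Let m > 0, l > 0, h > 0, set c_h = (1/l⁴ + h/(2l⁶))^{1/2}, and define ψ₁(x) = (−x)^{ml} e^{−c_h x²/(2h)} for x < 0. Then for every x < 0: −h² ψ₁''(x) + ( 1/l² + c_h² x² + h² ml(ml−1)/x² ) ψ₁(x) = E₁(h) ψ₁(x), where E₁(h) = 1/l² + (2ml+1) c_h h. -/

import Mathlib

/-- With `c_h = (1/l⁴ + h/(2l⁶))^{1/2}` and
`ψ₁(x) = (−x)^{ml} e^{−c_h x²/(2h)}` for `x < 0`, one has
`−h²ψ₁'' + (1/l² + c_h²x² + h²ml(ml−1)/x²)ψ₁ = E₁(h)ψ₁` with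
`E₁(h) = 1/l² + (2ml+1)c_h h`. -/
theorem stmt_11 (m l h : ℝ) (hm : 0 < m) (hl : 0 < l) (hh : 0 < h)
    (c E₁ : ℝ) (hc : c = Real.sqrt (1/l^4 + h/(2*l^6)))
    (hE₁ : E₁ = 1/l^2 + (2*m*l + 1)*c*h)
    (ψ₁ : ℝ → ℝ)
    (hψ₁ : ψ₁ = fun x => (-x) ^ (m*l) * Real.exp (-c * x^2 / (2*h))) :
    ∀ x : ℝ, x < 0 →
      -h^2 * deriv (deriv ψ₁) x
          + (1/l^2 + c^2 * x^2 + h^2 * m * l * (m*l - 1) / x^2) * ψ₁ x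
        = E₁ * ψ₁ x := by
  intro x hx
  have hhne : h ≠ 0 := hh.ne'
  have hlne : l ≠ 0 := hl.ne'
  set a : ℝ := m * l with ha
  have key : ∀ y : ℝ, y < 0 →
      HasDerivAt ψ₁ ((a / y - c * y / h) * ψ₁ y) y := by
    intro y hy
    have hy0 : (0:ℝ) < -y := by linarith
    have hyne : y ≠ 0 := hy.ne
    have h1 : HasDerivAt (fun t : ℝ => (-t) ^ a) ((-1) * a * (-y) ^ (a - 1)) y := by
      have := (hasDerivAt_neg y).rpow_const (p := a) (Or.inl hy0.ne')
      simpa using this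
    have hinner : HasDerivAt (fun t : ℝ => -c * t^2 / (2*h)) (-c * (2*y) / (2*h)) y := by
      have hp : HasDerivAt (fun t : ℝ => t^2) (2*y) y := by
        simpa using (hasDerivAt_pow 2 y)
      have := (hp.const_mul (-c)).div_const (2*h)
      simpa using this
    have h2 : HasDerivAt (fun t : ℝ => Real.exp (-c * t^2 / (2*h)))
        (Real.exp (-c * y^2 / (2*h)) * (-c * (2*y) / (2*h))) y := hinner.exp
    have hmul := h1.mul h2
    rw [hψ₁]
    convert hmul using 1
    case e'_4 => rfl
    case e'_5 => rfl
    case e'_8 => rfl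
    have hra : (-y) ^ (a-1) = (-y)^a / (-y) := by
      rw [Real.rpow_sub hy0, Real.rpow_one]
    rw [hra]
    field_simp
    ring
  have hev : deriv ψ₁ =ᶠ[nhds x] fun y => (a / y - c * y / h) * ψ₁ y := by
    filter_upwards [Iio_mem_nhds hx] with y hy
    exact (key y hy).deriv
  rw [Filter.EventuallyEq.deriv_eq hev]
  have hxne : x ≠ 0 := hx.ne
  have hfac : HasDerivAt (fun y : ℝ => a / y - c * y / h)
      (a * (-(x^2)⁻¹) - c / h) x := by
    have h1 : HasDerivAt (fun y : ℝ => a / y) (a * (-(x^2)⁻¹)) x := by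
      have := (hasDerivAt_inv hxne).const_mul a
      simpa [div_eq_mul_inv] using this
    have h2 : HasDerivAt (fun y : ℝ => c * y / h) (c / h) x := by
      have := ((hasDerivAt_id x).const_mul c).div_const h
      simpa [mul_comm] using this
    exact h1.sub h2
  have hsecond := (hfac.mul (key x hx)).deriv
  rw [show (fun y => (a / y - c * y / h) * ψ₁ y) = ((fun y => a / y - c * y / h) * ψ₁) from rfl, hsecond, hE₁]
  field_simp
  ring
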